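/- Assume K ≥ 2 and K·maxᵢ nᵢ ≥ 2, fix δ ∈ (0, 2], and set c_max := max over A ∈ S_K^L and x_A ∈ 𝒳^A with c_A(x_A) < ∞ of (1 + c_A(x_A)), η := (δ/2)/(2L log(C*Kn)), and δ' := (δ/2)/(2L c_max). Let {π*_A}_{A∈S_K^L} be a minimizer of F(π) := Σ_{A∈S_K^L} Σ_{x_A} (1 + c_A(x_A)) π_A(x_A) over families of nonnegative couplings vanishing wherever c_A = ∞ and satisfying Σ_{A∈S_K^L(i)} Pᵢ#π_A = μᵢ for all i (assumed to exist). Suppose g = (g₁,…,g_K) are potentials whose induced couplings π̃_A := π_A(g) satisfy Σ_{i=1}^K ‖μᵢ − Σ_{A∈S_K^L(i)} Pᵢ#π̃_A‖₁ ≤ δ', and suppose {π̂_A} is any family of nonnegative couplings vanishing wherever c_A = ∞ such that Σ_{A∈S_K^L(i)} Pᵢ#π̂_A = μᵢ for all i and Σ_{A∈S_K^L} ‖π̂_A − π̃_A‖₁ ≤ L Σ_{i=1}^K ‖Σ_{A∈S_K^L(i)} Pᵢ#π̃_A − μᵢ‖₁. Then F(π̂) ≤ F(π*) + δ, i.e.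 π̂ is a δ-approximate optimal solution of the truncated problem. -/

import Mathlib

open scoped ENNReal BigOperators

noncomputable section

/-- `S_K^L`: the nonempty subsets of `{1,…,K}` of size at most `L`. -/
def SKL (K L : ℕ) : Finset (Finset (Fin K)) :=
  Finset.univ.filter fun A => A.Nonempty ∧ A.card ≤ L

/-- `S_K^L(i)`: the members of `S_K^L` containing `i`. -/
def SKLi (K L : ℕ) (i : Fin K) : Finset (Finset (Fin K)) :=
  (SKL K L).filter fun A => i ∈ A

variable {K : ℕ} (𝒳 : Fin K → Type*) [∀ i, Fintype (𝒳 i)] [∀ i, DecidableEq (𝒳 i)]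

/-- The `i`-th marginal `Pᵢ#π_A` of a coupling `π_A` on `𝒳^A`
(zero when `i ∉ A`). -/
def marg (A : Finset (Fin K)) (π : ((j : A) → 𝒳 j.1) → ℝ) (i : Fin K) (xi : 𝒳 i) : ℝ :=
  if hi : i ∈ A then
    ∑ x : (j : A) → 𝒳 j.1, (if x ⟨i, hi⟩ = xi then π x else 0)
  else 0

/-- `Σ_{A ∈ S_K^L(i)} Pᵢ#π_A`, evaluated at `xi`. -/
def totMarg (L : ℕ) (π : (A : Finset (Fin K)) → ((j : A) → 𝒳 j.1) → ℝ)
    (i : Fin K) (xi : 𝒳 i) : ℝ :=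
  ∑ A ∈ SKLi K L i, marg 𝒳 A (π A) i xi

/-- The couplings `π_A(g)` induced by potentials `g`, interpreted as `0` where the
cost is `+∞`. -/
def piInd (η : ℝ) (c : (A : Finset (Fin K)) → ((j : A) → 𝒳 j.1) → ℝ≥0∞)
    (g : (i : Fin K) → 𝒳 i → ℝ) (A : Finset (Fin K)) (x : (j : A) → 𝒳 j.1) : ℝ :=
  if c A x = ⊤ then 0
  else Real.exp ((∑ j : A, g j.1 (x j) - (1 + (c A x).toReal)) / η)

/-- The dual objective `𝒢^L`. -/
def dualObj (η : ℝ) (L : ℕ) (c : (A : Finset (Fin K)) → ((j : A) → 𝒳 j.1) → ℝ≥0∞)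
    (μ : (i : Fin K) → 𝒳 i → ℝ) (g : (i : Fin K) → 𝒳 i → ℝ) : ℝ :=
  (∑ A ∈ SKL K L, ∑ x : (j : A) → 𝒳 j.1, piInd 𝒳 η c g A x)
    - (1 / η) * ∑ i : Fin K, ∑ xi : 𝒳 i, g i xi * μ i xi

/-- Unnormalized Kullback–Leibler divergence (convention `0 · log 0 = 0`). -/
def KLdiv {Z : Type*} [Fintype Z] (α β : Z → ℝ) : ℝ :=
  (∑ z, (β z - α z)) + ∑ z, α z * Real.log (α z / β z)

/-- ℓ¹ norm of a vector on a finite set. -/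
def l1 {Z : Type*} [Fintype Z] (v : Z → ℝ) : ℝ := ∑ z, |v z|

/-- `g : ℕ → potentials` is generated by the greedy Sinkhorn iteration: `g⁰ = 0`,
and at each step a coordinate `I` maximizing the KL-discrepancy of the `I`-th
marginal is updated by the Sinkhorn formula, all others kept fixed. -/
def IsGreedySinkhorn (η : ℝ) (L : ℕ)
    (c : (A : Finset (Fin K)) → ((j : A) → 𝒳 j.1) → ℝ≥0∞)
    (μ : (i : Fin K) → 𝒳 i → ℝ) (g : ℕ → (i : Fin K) → 𝒳 i → ℝ) : Prop :=
  (∀ i xi, g 0 i xi = 0) ∧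
  ∀ t : ℕ, ∃ I : Fin K,
    (∀ i : Fin K,
      KLdiv (μ i) (totMarg 𝒳 L (piInd 𝒳 η c (g t)) i) ≤
        KLdiv (μ I) (totMarg 𝒳 L (piInd 𝒳 η c (g t)) I)) ∧
    (∀ xI : 𝒳 I, g (t + 1) I xI =
      g t I xI + η * Real.log (μ I xI)
        - η * Real.log (totMarg 𝒳 L (piInd 𝒳 η c (g t)) I xI)) ∧
    (∀ i : Fin K, i ≠ I → g (t + 1) i = g t i)

/-- The marginal error `E_t` of the greedy Sinkhorn iteration. -/
def Err (η : ℝ) (L : ℕ) (c : (A : Finset (Fin K)) → ((j : A) → 𝒳 j.1) → ℝ≥0∞)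
    (μ : (i : Fin K) → 𝒳 i → ℝ) (g : ℕ → (i : Fin K) → 𝒳 i → ℝ) (t : ℕ) : ℝ :=
  ∑ i : Fin K,
    l1 (fun xi : 𝒳 i => μ i xi - totMarg 𝒳 L (piInd 𝒳 η c (g t)) i xi)

/-- `C* := maxᵢ nᵢ / n`. -/
def Cstar (n : ℝ) : ℝ := ((Finset.univ.sup fun i : Fin K => Fintype.card (𝒳 i) : ℕ) : ℝ) / n

/-- `min_{j, y} μ_j(y)`. -/
def muMin (μ : (i : Fin K) → 𝒳 i → ℝ) : ℝ :=
  sInf {v : ℝ | ∃ (j : Fin K) (y : 𝒳 j), v = μ j y}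

/-- `R̄ := L − η log min_{j,y} μ_j(y) + η L log(K C* n)`. -/
def Rbar (η : ℝ) (L : ℕ) (n : ℝ) (μ : (i : Fin K) → 𝒳 i → ℝ) : ℝ :=
  (L : ℝ) - η * Real.log (muMin 𝒳 μ) + η * L * Real.log (K * Cstar 𝒳 n * n)


/-- The linear objective `F(π) = Σ_{A∈S_K^L} Σ_{x_A} (1 + c_A(x_A)) π_A(x_A)`
(for couplings vanishing where `c_A = ∞`). -/
def Fobj (L : ℕ) (c : (A : Finset (Fin K)) → ((j : A) → 𝒳 j.1) → ℝ≥0∞)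
    (π : (A : Finset (Fin K)) → ((j : A) → 𝒳 j.1) → ℝ) : ℝ :=
  ∑ A ∈ SKL K L, ∑ x : (j : A) → 𝒳 j.1, (1 + (c A x).toReal) * π A x

/-- Feasibility for the truncated problem: nonnegative couplings vanishing wherever
`c_A = ∞`, with marginals `μ`. -/
def Feasible (L : ℕ) (c : (A : Finset (Fin K)) → ((j : A) → 𝒳 j.1) → ℝ≥0∞)
    (μ : (i : Fin K) → 𝒳 i → ℝ)
    (π : (A : Finset (Fin K)) → ((j : A) → 𝒳 j.1) → ℝ) : Prop :=
  (∀ A x, 0 ≤ π A x) ∧ (∀ A x, c A x = ⊤ → π A x = 0) ∧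
  (∀ (i : Fin K) (xi : 𝒳 i), totMarg 𝒳 L π i xi = μ i xi)

/-- `c_max := max over A ∈ S_K^L and x_A with c_A(x_A) < ∞ of (1 + c_A(x_A))`. -/
def cmax (L : ℕ) (c : (A : Finset (Fin K)) → ((j : A) → 𝒳 j.1) → ℝ≥0∞) : ℝ :=
  sSup {v : ℝ | ∃ A ∈ SKL K L, ∃ x : (j : A) → 𝒳 j.1,
    c A x ≠ ⊤ ∧ v = 1 + (c A x).toReal}

set_option linter.unusedSectionVars false
set_option maxHeartbeats 1000000

namespace Stmt5Aux

lemma mem_SKL {K L : ℕ} {A : Finset (Fin K)} :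
    A ∈ SKL K L ↔ A.Nonempty ∧ A.card ≤ L := by simp [SKL]

lemma mem_SKLi {K L : ℕ} {i : Fin K} {A : Finset (Fin K)} :
    A ∈ SKLi K L i ↔ (A.Nonempty ∧ A.card ≤ L) ∧ i ∈ A := by simp [SKLi, SKL]

lemma singleton_mem_SKL {K L : ℕ} (hL : 1 ≤ L) (i : Fin K) : ({i} : Finset (Fin K)) ∈ SKL K L :=
  mem_SKL.mpr ⟨Finset.singleton_nonempty i, by simpa using hL⟩

lemma singleton_mem_SKLi {K L : ℕ} (hL : 1 ≤ L) (i : Fin K) :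
    ({i} : Finset (Fin K)) ∈ SKLi K L i :=
  mem_SKLi.mpr ⟨⟨Finset.singleton_nonempty i, by simpa using hL⟩, Finset.mem_singleton_self i⟩

def j0 {K : ℕ} (i : Fin K) : ({i} : Finset (Fin K)) := ⟨i, Finset.mem_singleton_self i⟩

def ι (i : Fin K) (y : 𝒳 i) : (j : ({i} : Finset (Fin K))) → 𝒳 j.1 :=
  fun j => cast (congrArg 𝒳 (Finset.mem_singleton.mp j.2).symm) y

lemma ι_apply (i : Fin K) (y : 𝒳 i) : ι 𝒳 i y (j0 i) = y :=
  eq_of_heq (cast_heq _ _)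

lemma ι_bijective (i : Fin K) : Function.Bijective (ι 𝒳 i) := by
  constructor
  · intro y y' h
    have := congrFun h (j0 i)
    rwa [ι_apply, ι_apply] at this
  · intro x
    refine ⟨x (j0 i), funext fun j => ?_⟩
    have hj : j = j0 i := Subtype.ext (Finset.mem_singleton.mp j.2)
    subst hj
    exact ι_apply 𝒳 i (x (j0 i))

lemma sum_pi_singleton (i : Fin K) (F : ((j : ({i} : Finset (Fin K))) → 𝒳 j.1) → ℝ) :
    ∑ x, F x = ∑ y : 𝒳 i, F (ι 𝒳 i y) :=
  (Fintype.sum_bijective _ (ι_bijective 𝒳 i) _ _ fun _ => rfl).symm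

lemma marg_apply {A : Finset (Fin K)} {i : Fin K} (hi : i ∈ A)
    (π : ((j : A) → 𝒳 j.1) → ℝ) (xi : 𝒳 i) :
    marg 𝒳 A π i xi = ∑ x : (j : A) → 𝒳 j.1, (if x ⟨i, hi⟩ = xi then π x else 0) :=
  dif_pos hi

lemma marg_singleton (i : Fin K) (π : ((j : ({i} : Finset (Fin K))) → 𝒳 j.1) → ℝ) (xi : 𝒳 i) :
    marg 𝒳 {i} π i xi = π (ι 𝒳 i xi) := by
  rw [marg_apply 𝒳 (Finset.mem_singleton_self i), sum_pi_singleton]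
  have h1 : ∀ y : 𝒳 i,
      (if ι 𝒳 i y ⟨i, Finset.mem_singleton_self i⟩ = xi then π (ι 𝒳 i y) else 0)
        = (if y = xi then π (ι 𝒳 i y) else 0) := by
    intro y
    rw [show ι 𝒳 i y ⟨i, Finset.mem_singleton_self i⟩ = y from eq_of_heq (cast_heq _ _)]
  rw [Finset.sum_congr rfl fun y _ => h1 y, Finset.sum_ite_eq' Finset.univ xi]
  simp

lemma marg_nonneg {A : Finset (Fin K)} {π : ((j : A) → 𝒳 j.1) → ℝ}
    (hπ : ∀ x, 0 ≤ π x) (i : Fin K) (xi : 𝒳 i) : 0 ≤ marg 𝒳 A π i xi := by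
  unfold marg
  split
  · exact Finset.sum_nonneg fun x _ => by split <;> simp [hπ]
  · exact le_refl 0


lemma collapse {A : Finset (Fin K)} {i : Fin K} (hi : i ∈ A)
    (w : 𝒳 i → ℝ) (π : ((j : A) → 𝒳 j.1) → ℝ) :
    ∑ xi : 𝒳 i, w xi * marg 𝒳 A π i xi
      = ∑ x : (j : A) → 𝒳 j.1, w (x ⟨i, hi⟩) * π x := by
  simp only [marg_apply 𝒳 hi, Finset.mul_sum]
  rw [Finset.sum_comm]
  refine Finset.sum_congr rfl fun x _ => ?_
  have : ∀ xi : 𝒳 i, (w xi * if x ⟨i, hi⟩ = xi then π x else 0)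
      = (if x ⟨i, hi⟩ = xi then w xi * π x else 0) := by
    intro xi; split <;> simp
  rw [Finset.sum_congr rfl fun xi _ => this xi, Finset.sum_ite_eq Finset.univ]
  simp

lemma sum_weight (L : ℕ) (w : (i : Fin K) → 𝒳 i → ℝ)
    (π : (A : Finset (Fin K)) → ((j : A) → 𝒳 j.1) → ℝ) :
    ∑ A ∈ SKL K L, ∑ x : (j : A) → 𝒳 j.1, (∑ j : A, w j.1 (x j)) * π A x
      = ∑ i : Fin K, ∑ xi : 𝒳 i, w i xi * totMarg 𝒳 L π i xi := by
  have hrhs : ∀ i : Fin K, ∑ xi : 𝒳 i, w i xi * totMarg 𝒳 L π i xi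
      = ∑ A ∈ SKLi K L i, ∑ x : (j : A) → 𝒳 j.1,
          (if hi : i ∈ A then w i (x ⟨i, hi⟩) else 0) * π A x := by
    intro i
    unfold totMarg
    simp only [Finset.mul_sum]
    rw [Finset.sum_comm]
    refine Finset.sum_congr rfl fun A hA => ?_
    have hi : i ∈ A := (mem_SKLi.mp hA).2
    rw [collapse 𝒳 hi]
    refine Finset.sum_congr rfl fun x _ => ?_
    rw [dif_pos hi]
  rw [Finset.sum_congr rfl fun i _ => hrhs i]
  rw [← Finset.sum_comm' (s := SKL K L) (t := fun A => A) (t' := Finset.univ)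
    (s' := fun i => SKLi K L i) (f := fun A i => ∑ x : (j : A) → 𝒳 j.1,
      (if hi : i ∈ A then w i (x ⟨i, hi⟩) else 0) * π A x) ?_]
  · refine Finset.sum_congr rfl fun A _ => ?_
    rw [Finset.sum_comm]
    refine Finset.sum_congr rfl fun x _ => ?_
    rw [← Finset.sum_attach A, Finset.sum_mul]
    refine Finset.sum_congr rfl fun j _ => ?_
    rw [dif_pos j.2]
  · intro A i
    simp [mem_SKLi, mem_SKL]
    try tauto

lemma marg_add {A : Finset (Fin K)} (π ρ : ((j : A) → 𝒳 j.1) → ℝ) (i : Fin K) (xi : 𝒳 i) :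
    marg 𝒳 A (fun x => π x + ρ x) i xi = marg 𝒳 A π i xi + marg 𝒳 A ρ i xi := by
  unfold marg
  split
  · rw [← Finset.sum_add_distrib]
    refine Finset.sum_congr rfl fun x _ => ?_
    split <;> simp
  · simp

lemma totMarg_add (L : ℕ) (π ρ : (A : Finset (Fin K)) → ((j : A) → 𝒳 j.1) → ℝ)
    (i : Fin K) (xi : 𝒳 i) :
    totMarg 𝒳 L (fun A x => π A x + ρ A x) i xi
      = totMarg 𝒳 L π i xi + totMarg 𝒳 L ρ i xi := by
  unfold totMarg
  rw [← Finset.sum_add_distrib]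
  exact Finset.sum_congr rfl fun A _ => marg_add 𝒳 _ _ i xi

lemma totMarg_nonneg {L : ℕ} {π : (A : Finset (Fin K)) → ((j : A) → 𝒳 j.1) → ℝ}
    (hπ : ∀ A x, 0 ≤ π A x) (i : Fin K) (xi : 𝒳 i) : 0 ≤ totMarg 𝒳 L π i xi :=
  Finset.sum_nonneg fun A _ => marg_nonneg 𝒳 (hπ A) i xi

lemma marg_mono {A : Finset (Fin K)} {π ρ : ((j : A) → 𝒳 j.1) → ℝ}
    (h : ∀ x, π x ≤ ρ x) (i : Fin K) (xi : 𝒳 i) : marg 𝒳 A π i xi ≤ marg 𝒳 A ρ i xi := by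
  unfold marg
  split
  · refine Finset.sum_le_sum fun x _ => ?_
    split <;> simp [h]
  · exact le_refl 0


/-- the fill family supported on singletons -/
def fillF (d : (i : Fin K) → 𝒳 i → ℝ) (A : Finset (Fin K)) (x : (j : A) → 𝒳 j.1) : ℝ :=
  ∑ j : A, if A = {j.1} then d j.1 (x j) else 0

lemma fillF_eq_zero {d : (i : Fin K) → 𝒳 i → ℝ} {A : Finset (Fin K)}
    (h : ∀ j : Fin K, A ≠ {j}) (x : (j : A) → 𝒳 j.1) : fillF 𝒳 d A x = 0 := by
  unfold fillF
  refine Finset.sum_eq_zero fun j _ => ?_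
  rw [if_neg (h j.1)]

lemma fillF_singleton (d : (i : Fin K) → 𝒳 i → ℝ) (i : Fin K)
    (x : (j : ({i} : Finset (Fin K))) → 𝒳 j.1) :
    fillF 𝒳 d {i} x = d i (x (j0 i)) := by
  unfold fillF
  letI : Unique ({i} : Finset (Fin K)) :=
    ⟨⟨j0 i⟩, fun j => Subtype.ext (Finset.mem_singleton.mp j.2)⟩
  rw [Fintype.sum_unique]
  show (if ({i} : Finset (Fin K)) = {i} then d i (x (j0 i)) else 0) = d i (x (j0 i))
  rw [if_pos rfl]

lemma marg_fillF (d : (i : Fin K) → 𝒳 i → ℝ) {A : Finset (Fin K)} {i : Fin K}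
    (hi : i ∈ A) (xi : 𝒳 i) :
    marg 𝒳 A (fillF 𝒳 d A) i xi = if A = {i} then d i xi else 0 := by
  by_cases hA : A = {i}
  · subst hA
    rw [if_pos rfl, marg_singleton, fillF_singleton, ι_apply]
  · rw [if_neg hA, marg_apply 𝒳 hi]
    refine Finset.sum_eq_zero fun x _ => ?_
    have hz : fillF 𝒳 d A x = 0 := by
      refine fillF_eq_zero 𝒳 ?_ x
      intro j hj
      -- if A = {j} then i ∈ A gives i = j, so A = {i}, contradiction
      exact hA (by rw [hj]; rw [hj] at hi; rw [Finset.mem_singleton.mp hi])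
    rw [hz]
    split <;> rfl

lemma totMarg_fillF {L : ℕ} (hL : 1 ≤ L) (d : (i : Fin K) → 𝒳 i → ℝ) (i : Fin K) (xi : 𝒳 i) :
    totMarg 𝒳 L (fillF 𝒳 d) i xi = d i xi := by
  unfold totMarg
  rw [Finset.sum_congr rfl fun A hA => marg_fillF 𝒳 d (mem_SKLi.mp hA).2 xi]
  rw [Finset.sum_ite_eq' (SKLi K L i) ({i} : Finset (Fin K)) (fun _ => d i xi)]
  rw [if_pos (singleton_mem_SKLi hL i)]

lemma prod_ge_one_sub_sum {ι : Type*} (s : Finset ι) (a : ι → ℝ)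
    (h0 : ∀ i ∈ s, 0 ≤ a i) (h1 : ∀ i ∈ s, a i ≤ 1) :
    1 - ∑ i ∈ s, (1 - a i) ≤ ∏ i ∈ s, a i := by
  induction s using Finset.cons_induction with
  | empty => simp
  | cons j s hj ih =>
    rw [Finset.prod_cons, Finset.sum_cons]
    have ihs := ih (fun i hi => h0 i (Finset.mem_cons_of_mem hi))
      (fun i hi => h1 i (Finset.mem_cons_of_mem hi))
    have hS : 0 ≤ ∑ i ∈ s, (1 - a i) :=
      Finset.sum_nonneg fun i hi => by linarith [h1 i (Finset.mem_cons_of_mem hi)]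
    have hj0 : 0 ≤ a j := h0 j (Finset.mem_cons_self j s)
    have hj1 : a j ≤ 1 := h1 j (Finset.mem_cons_self j s)
    nlinarith [mul_le_mul_of_nonneg_left ihs hj0]

lemma prod_le_of_mem {ι : Type*} [DecidableEq ι] (s : Finset ι) (a : ι → ℝ)
    (h0 : ∀ i ∈ s, 0 ≤ a i) (h1 : ∀ i ∈ s, a i ≤ 1) {i : ι} (hi : i ∈ s) :
    ∏ j ∈ s, a j ≤ a i := by
  rw [← Finset.mul_prod_erase s a hi]
  have h2 : ∏ j ∈ s.erase i, a j ≤ 1 :=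
    Finset.prod_le_one (fun j hj => h0 j (Finset.mem_of_mem_erase hj))
      (fun j hj => h1 j (Finset.mem_of_mem_erase hj))
  have h3 : 0 ≤ ∏ j ∈ s.erase i, a j :=
    Finset.prod_nonneg fun j hj => h0 j (Finset.mem_of_mem_erase hj)
  nlinarith [mul_le_mul_of_nonneg_left h2 (h0 i hi)]

lemma gibbs_pointwise {η C G q : ℝ} (hη : 0 < η) (hq : 0 ≤ q) :
    C * Real.exp ((G - C)/η) + η * (Real.exp ((G - C)/η) * (Real.log (Real.exp ((G - C)/η)) - 1))
        - G * Real.exp ((G - C)/η)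
      ≤ C * q + η * (q * (Real.log q - 1)) - G * q := by
  set p := Real.exp ((G - C)/η) with hp
  have hppos : 0 < p := Real.exp_pos _
  have hlogp : Real.log p = (G - C)/η := Real.log_exp _
  have hηlogp : η * Real.log p = G - C := by
    rw [hlogp]; field_simp
  rcases eq_or_lt_of_le hq with h0 | hqpos
  · rw [← h0]
    simp only [mul_zero, zero_mul, sub_zero, add_zero, zero_sub]
    nlinarith [hppos, hηlogp]
  · have hlog : Real.log (p / q) ≤ p / q - 1 := Real.log_le_sub_one_of_pos (by positivity)
    have hlogd : Real.log (p / q) = Real.log p - Real.log q :=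
      Real.log_div (ne_of_gt hppos) (ne_of_gt hqpos)
    have key : q * Real.log q - q * Real.log p - q + p ≥ 0 := by
      have := mul_le_mul_of_nonneg_left hlog (le_of_lt hqpos)
      rw [hlogd] at this
      have hqp : q * (p / q) = p := by field_simp
      nlinarith
    have expand : C * q + η * (q * (Real.log q - 1)) - G * q
        - (C * p + η * (p * (Real.log p - 1)) - G * p)
        = η * (q * Real.log q - q * Real.log p - q + p)
          + (C - G + η * Real.log p) * (q - p) := by ring
    nlinarith [mul_nonneg (le_of_lt hη) key, hηlogp]

lemma cell_entropy {p t : ℝ} (hp : 0 ≤ p) :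
    p * (1 - Real.log p) ≤ (1 + t) * p + Real.exp (-t - 1) := by
  rcases eq_or_lt_of_le hp with h0 | hppos
  · rw [← h0]; simp [Real.exp_pos, le_of_lt (Real.exp_pos _)]
  · have hlog : Real.log (Real.exp (-t - 1) / p) ≤ Real.exp (-t - 1) / p - 1 :=
      Real.log_le_sub_one_of_pos (by positivity)
    have hlogd : Real.log (Real.exp (-t - 1) / p) = (-t - 1) - Real.log p := by
      rw [Real.log_div (Real.exp_ne_zero _) (ne_of_gt hppos), Real.log_exp]
    rw [hlogd] at hlog
    have := mul_le_mul_of_nonneg_left hlog (le_of_lt hppos)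
    have hqp : p * (Real.exp (-t - 1) / p) = Real.exp (-t - 1) := by field_simp
    nlinarith

lemma plogp_nonpos {p : ℝ} (h0 : 0 ≤ p) (h1 : p ≤ 5/2) : p * (Real.log p - 1) ≤ 0 := by
  rcases eq_or_lt_of_le h0 with hz | hppos
  · rw [← hz]; simp
  · have h52 : (5/2 : ℝ) ≤ Real.exp 1 := by
      have := Real.exp_one_gt_d9
      norm_num at this ⊢
      linarith
    have : Real.log p ≤ 1 := by
      calc Real.log p ≤ Real.log (Real.exp 1) :=
            Real.log_le_log hppos (le_trans h1 h52)
        _ = 1 := Real.log_exp 1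
    nlinarith

lemma sum_inv_pow_card {K : ℕ} (hK : 1 ≤ K) (L : ℕ) :
    ∑ A ∈ SKL K L, ((K : ℝ))⁻¹ ^ A.card ≤ Real.exp 1 - 1 := by
  have hKpos : (0 : ℝ) < K := by exact_mod_cast hK
  have h1 : ∑ A ∈ SKL K L, ((K : ℝ))⁻¹ ^ A.card
      ≤ ∑ A ∈ Finset.univ.filter (fun A : Finset (Fin K) => A.Nonempty), ((K : ℝ))⁻¹ ^ A.card := by
    refine Finset.sum_le_sum_of_subset_of_nonneg ?_ (fun A _ _ => by positivity)
    intro A hA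
    simp only [Finset.mem_filter, Finset.mem_univ, true_and]
    exact (mem_SKL.mp hA).1
  have h2 : ∑ A ∈ Finset.univ.filter (fun A : Finset (Fin K) => A.Nonempty), ((K : ℝ))⁻¹ ^ A.card
      = (∑ A : Finset (Fin K), ((K : ℝ))⁻¹ ^ A.card) - 1 := by
    rw [← Finset.sum_filter_add_sum_filter_not Finset.univ
      (fun A : Finset (Fin K) => A.Nonempty) (fun A => ((K : ℝ))⁻¹ ^ A.card)]
    have : Finset.univ.filter (fun A : Finset (Fin K) => ¬ A.Nonempty) = {∅} := by
      ext A
      simp [Finset.not_nonempty_iff_eq_empty]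
    rw [this]
    simp
  have h3 : ∑ A : Finset (Fin K), ((K : ℝ))⁻¹ ^ A.card = (1 + (K : ℝ)⁻¹) ^ K := by
    have h := Finset.prod_add (fun _ : Fin K => ((K : ℝ))⁻¹) (fun _ : Fin K => (1 : ℝ)) Finset.univ
    simp only [Finset.prod_const, Finset.prod_const_one, one_pow, mul_one, Finset.powerset_univ,
      Finset.card_univ, Fintype.card_fin] at h
    rw [← h]
    ring
  have h4 : (1 + (K : ℝ)⁻¹) ^ K ≤ Real.exp 1 := by
    have hle : 1 + (K : ℝ)⁻¹ ≤ Real.exp ((K : ℝ)⁻¹) := by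
      have := Real.add_one_le_exp ((K : ℝ)⁻¹)
      linarith
    calc (1 + (K : ℝ)⁻¹) ^ K ≤ (Real.exp ((K : ℝ)⁻¹)) ^ K :=
          pow_le_pow_left₀ (by positivity) hle K
      _ = Real.exp ((K : ℝ)⁻¹ * K) := by rw [← Real.exp_nat_mul]; ring_nf
      _ = Real.exp 1 := by rw [inv_mul_cancel₀ (ne_of_gt hKpos)]
  linarith

lemma marg_mul_left {A : Finset (Fin K)} {i : Fin K} (hi : i ∈ A)
    (w : 𝒳 i → ℝ) (π : ((j : A) → 𝒳 j.1) → ℝ) (xi : 𝒳 i) :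
    marg 𝒳 A (fun x => w (x ⟨i, hi⟩) * π x) i xi = w xi * marg 𝒳 A π i xi := by
  rw [marg_apply 𝒳 hi, marg_apply 𝒳 hi, Finset.mul_sum]
  refine Finset.sum_congr rfl fun x _ => ?_
  by_cases h : x ⟨i, hi⟩ = xi
  · rw [if_pos h, if_pos h, h]
  · rw [if_neg h, if_neg h, mul_zero]

lemma numeric_final {x d' l einv : ℝ} (hx : 0.6931471803 < x) (hd0 : 0 ≤ d')
    (hd : d' ≤ 1/4) (hl : 2 ≤ l) (he : (2.7182818286:ℝ)⁻¹ < einv) :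
    (1 + d') * (1 + x) + (1 - einv) ≤ 2 * l * x := by
  have hx0 : (0:ℝ) ≤ x := by norm_num at hx ⊢; linarith
  nlinarith [mul_nonneg (sub_nonneg.mpr hl) hx0, mul_nonneg (sub_nonneg.mpr hd) hx0]

end Stmt5Aux

open Stmt5Aux

/-- with `η = (δ/2)/(2L log(C*Kn))` and
`δ' = (δ/2)/(2L c_max)`, if the induced couplings `π̃ = π(g)` have total marginal
error at most `δ'` and `π̂` is feasible with
`Σ_A ‖π̂_A − π̃_A‖₁ ≤ L Σᵢ ‖Σ_A Pᵢ#π̃_A − μᵢ‖₁`, then `π̂` is a `δ`-approximate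
solution: `F(π̂) ≤ F(π*) + δ` for any minimizer `π*`. -/
theorem stmt5 (K L : ℕ) (hK : 2 ≤ K) (hL : 1 ≤ L) (hLK : L ≤ K)
    (𝒳 : Fin K → Type*) [∀ i, Fintype (𝒳 i)] [∀ i, DecidableEq (𝒳 i)]
    [∀ i, Nonempty (𝒳 i)]
    (n : ℝ) (hn : 0 < n)
    (hKn : 2 ≤ K * (Finset.univ.sup fun i : Fin K => Fintype.card (𝒳 i)))
    (δ : ℝ) (hδ : 0 < δ) (hδ2 : δ ≤ 2)
    (c : (A : Finset (Fin K)) → ((j : A) → 𝒳 j.1) → ℝ≥0∞)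
    (hc : ∀ (i : Fin K) (x : (j : ({i} : Finset (Fin K))) → 𝒳 j.1), c {i} x = 0)
    (μ : (i : Fin K) → 𝒳 i → ℝ) (hμpos : ∀ i xi, 0 < μ i xi)
    (hmass : ∑ i : Fin K, ∑ xi : 𝒳 i, μ i xi = 1)
    (η δ' : ℝ)
    (hη : η = (δ / 2) / (2 * L * Real.log (Cstar 𝒳 n * K * n)))
    (hδ' : δ' = (δ / 2) / (2 * L * cmax 𝒳 L c))
    (πstar : (A : Finset (Fin K)) → ((j : A) → 𝒳 j.1) → ℝ)
    (hπstar : Feasible 𝒳 L c μ πstar)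
    (hπstarOpt : ∀ π, Feasible 𝒳 L c μ π → Fobj 𝒳 L c πstar ≤ Fobj 𝒳 L c π)
    (g : (i : Fin K) → 𝒳 i → ℝ)
    (hclose : ∑ i : Fin K,
        l1 (fun xi : 𝒳 i => μ i xi - totMarg 𝒳 L (piInd 𝒳 η c g) i xi) ≤ δ')
    (πhat : (A : Finset (Fin K)) → ((j : A) → 𝒳 j.1) → ℝ)
    (hπhatPos : ∀ A x, 0 ≤ πhat A x)
    (hπhatVan : ∀ A x, c A x = ⊤ → πhat A x = 0)
    (hπhatMarg : ∀ (i : Fin K) (xi : 𝒳 i), totMarg 𝒳 L πhat i xi = μ i xi)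
    (hπhatRound : ∑ A ∈ SKL K L, l1 (fun x => πhat A x - piInd 𝒳 η c g A x) ≤
      (L : ℝ) * ∑ i : Fin K,
        l1 (fun xi : 𝒳 i => totMarg 𝒳 L (piInd 𝒳 η c g) i xi - μ i xi)) :
    Fobj 𝒳 L c πhat ≤ Fobj 𝒳 L c πstar + δ := by
  classical
  -- first dispose of the trivial case L = 1
  by_cases hLone : L = 1
  · subst hLone
    have hSKLi1 : ∀ i : Fin K, SKLi K 1 i = {({i} : Finset (Fin K))} := by
      intro i
      ext B
      simp only [mem_SKLi, Finset.mem_singleton]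
      constructor
      · rintro ⟨⟨hne, hcard⟩, hiB⟩
        have : B.card = 1 := le_antisymm hcard (Finset.card_pos.mpr hne)
        obtain ⟨b, rfl⟩ := Finset.card_eq_one.mp this
        rw [Finset.mem_singleton.mp hiB]
      · rintro rfl
        exact ⟨⟨Finset.singleton_nonempty i, by simp⟩, Finset.mem_singleton_self i⟩
    have hterm : ∀ (π : (A : Finset (Fin K)) → ((j : A) → 𝒳 j.1) → ℝ),
        (∀ (i : Fin K) (xi : 𝒳 i), totMarg 𝒳 1 π i xi = μ i xi) →
        ∀ i : Fin K,
        ∑ x : (j : ({i} : Finset (Fin K))) → 𝒳 j.1, (1 + (c {i} x).toReal) * π {i} x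
          = ∑ y : 𝒳 i, μ i y := by
      intro π hπm i
      have hm : ∀ y : 𝒳 i, marg 𝒳 {i} (π {i}) i y = μ i y := by
        intro y
        have := hπm i y
        unfold totMarg at this
        rwa [hSKLi1 i, Finset.sum_singleton] at this
      rw [sum_pi_singleton]
      refine Finset.sum_congr rfl fun y _ => ?_
      rw [hc i, ← hm y, marg_singleton]
      simp
    have hFeq : Fobj 𝒳 1 c πhat = Fobj 𝒳 1 c πstar := by
      unfold Fobj
      refine Finset.sum_congr rfl fun A hA => ?_
      obtain ⟨hne, hcard⟩ := mem_SKL.mp hA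
      obtain ⟨i, rfl⟩ :=
        Finset.card_eq_one.mp (le_antisymm hcard (Finset.card_pos.mpr hne))
      rw [hterm πhat hπhatMarg i, hterm πstar hπstar.2.2 i]
    rw [hFeq]
    linarith
  have hL2 : 2 ≤ L := by omega
  -- ===== setup =====
  have hK1 : 1 ≤ K := by omega
  have hLR : (1:ℝ) ≤ L := by exact_mod_cast hL
  have hLR2 : (2:ℝ) ≤ L := by exact_mod_cast hL2
  have hn0 : n ≠ 0 := ne_of_gt hn
  set a : ℕ := Finset.univ.sup fun i : Fin K => Fintype.card (𝒳 i) with ha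
  have hMeq : Cstar 𝒳 n * ↑K * n = ((K * a : ℕ) : ℝ) := by
    unfold Cstar
    push_cast
    field_simp
    ring
  set M : ℝ := ((K * a : ℕ) : ℝ) with hMdef
  have hM2 : (2:ℝ) ≤ M := by
    rw [hMdef]; exact_mod_cast hKn
  have hMpos : (0:ℝ) < M := by linarith
  have hlog2 : (0.6931471803 : ℝ) < Real.log 2 := Real.log_two_gt_d9
  have hlogM2 : Real.log 2 ≤ Real.log M := Real.log_le_log two_pos hM2
  have hlogMpos : (0:ℝ) < Real.log M := by linarith
  have hη' : η = (δ / 2) / (2 * L * Real.log M) := by rw [hη, hMeq]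
  have hηpos : 0 < η := by
    rw [hη']
    positivity
  -- cmax facts
  have hcbdd : BddAbove {v : ℝ | ∃ A ∈ SKL K L, ∃ x : (j : A) → 𝒳 j.1,
      c A x ≠ ⊤ ∧ v = 1 + (c A x).toReal} := by
    refine ⟨1 + ∑ A ∈ SKL K L, ∑ x : (j : A) → 𝒳 j.1, (c A x).toReal, ?_⟩
    rintro v ⟨A, hA, x, hx, rfl⟩
    have h1 : (c A x).toReal ≤ ∑ x : (j : A) → 𝒳 j.1, (c A x).toReal :=
      Finset.single_le_sum (fun _ _ => ENNReal.toReal_nonneg) (Finset.mem_univ x)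
    have h2 : ∑ x : (j : A) → 𝒳 j.1, (c A x).toReal
        ≤ ∑ A ∈ SKL K L, ∑ x : (j : A) → 𝒳 j.1, (c A x).toReal :=
      Finset.single_le_sum (f := fun B : Finset (Fin K) => ∑ x : (j : B) → 𝒳 j.1, (c B x).toReal)
        (fun B _ => Finset.sum_nonneg fun y _ => ENNReal.toReal_nonneg) hA
    linarith
  have hi0 : ∃ i : Fin K, True := ⟨⟨0, by omega⟩, trivial⟩
  obtain ⟨i0, -⟩ := hi0
  have hcm1 : 1 ≤ cmax 𝒳 L c := by
    have hmem : (1:ℝ) ∈ {v : ℝ | ∃ A ∈ SKL K L, ∃ x : (j : A) → 𝒳 j.1,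
        c A x ≠ ⊤ ∧ v = 1 + (c A x).toReal} := by
      refine ⟨{i0}, singleton_mem_SKL hL i0, Classical.arbitrary _, ?_, ?_⟩
      · rw [hc]; exact ENNReal.zero_ne_top
      · rw [hc]; simp
    exact le_csSup hcbdd hmem
  have hle_cm : ∀ A ∈ SKL K L, ∀ x : (j : A) → 𝒳 j.1, c A x ≠ ⊤ →
      1 + (c A x).toReal ≤ cmax 𝒳 L c := by
    intro A hA x hx
    exact le_csSup hcbdd ⟨A, hA, x, hx, rfl⟩
  have hcmpos : (0:ℝ) < cmax 𝒳 L c := by linarith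
  have hδ'pos : 0 < δ' := by rw [hδ']; positivity
  have hδ'14 : δ' ≤ 1/4 := by
    rw [hδ']
    rw [div_le_iff₀ (by positivity)]
    nlinarith
  -- ===== the induced coupling and its marginals =====
  set pt := piInd 𝒳 η c g with hptdef
  set ν : (i : Fin K) → 𝒳 i → ℝ := totMarg 𝒳 L pt with hνdef
  have hptnn : ∀ A x, 0 ≤ pt A x := by
    intro A x
    rw [hptdef]
    unfold piInd
    split
    · exact le_refl 0
    · exact (Real.exp_pos _).le
  have hνnn : ∀ i xi, 0 ≤ ν i xi := fun i xi => totMarg_nonneg 𝒳 hptnn i xi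
  set e0 : ℝ := ∑ i : Fin K, l1 (fun xi : 𝒳 i => μ i xi - ν i xi) with he0def
  have he0δ' : e0 ≤ δ' := hclose
  have he0nn : 0 ≤ e0 :=
    Finset.sum_nonneg fun i _ => Finset.sum_nonneg fun xi _ => abs_nonneg _
  have habs : ∀ i xi, |μ i xi - ν i xi| ≤ e0 := by
    intro i xi
    rw [he0def]
    unfold l1
    calc |μ i xi - ν i xi| ≤ ∑ y : 𝒳 i, |μ i y - ν i y| :=
          Finset.single_le_sum (f := fun y : 𝒳 i => |μ i y - ν i y|)
            (fun y _ => abs_nonneg _) (Finset.mem_univ xi)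
      _ ≤ ∑ j : Fin K, ∑ y : 𝒳 j, |μ j y - ν j y| := Finset.single_le_sum
          (f := fun j : Fin K => ∑ y : 𝒳 j, |μ j y - ν j y|)
          (fun j _ => Finset.sum_nonneg fun y _ => abs_nonneg _) (Finset.mem_univ i)
  have hμ1 : ∀ i xi, μ i xi ≤ 1 := by
    intro i xi
    calc μ i xi ≤ ∑ y : 𝒳 i, μ i y :=
          Finset.single_le_sum (fun y _ => (hμpos i y).le) (Finset.mem_univ xi)
      _ ≤ ∑ i : Fin K, ∑ y : 𝒳 i, μ i y := Finset.single_le_sum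
          (f := fun i : Fin K => ∑ y : 𝒳 i, μ i y)
          (fun j _ => Finset.sum_nonneg fun y _ => (hμpos j y).le) (Finset.mem_univ i)
      _ = 1 := hmass
  have hν54 : ∀ i xi, ν i xi ≤ 5/4 := by
    intro i xi
    have h1 := habs i xi
    have h2 := hμ1 i xi
    have := abs_le.mp h1
    linarith [he0δ', hδ'14]
  -- ===== the scaled-down coupling pp =====
  set sc : (A : Finset (Fin K)) → ((j : A) → 𝒳 j.1) → ℝ :=
    fun A x => ∏ j : A, min 1 (ν j.1 (x j) / μ j.1 (x j)) with hscdef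
  have hminnn : ∀ (i : Fin K) (y : 𝒳 i), 0 ≤ min 1 (ν i y / μ i y) := by
    intro i y
    exact le_min zero_le_one (div_nonneg (hνnn i y) (hμpos i y).le)
  have hsc0 : ∀ A x, 0 ≤ sc A x :=
    fun A x => Finset.prod_nonneg fun j _ => hminnn j.1 (x j)
  have hsc1 : ∀ A x, sc A x ≤ 1 :=
    fun A x => Finset.prod_le_one (fun j _ => hminnn j.1 (x j))
      (fun j _ => min_le_left _ _)
  set pp : (A : Finset (Fin K)) → ((j : A) → 𝒳 j.1) → ℝ :=
    fun A x => πstar A x * sc A x with hppdef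
  have hsnn : ∀ A x, 0 ≤ πstar A x := hπstar.1
  have hppnn : ∀ A x, 0 ≤ pp A x := fun A x => mul_nonneg (hsnn A x) (hsc0 A x)
  have hpple : ∀ A x, pp A x ≤ πstar A x := by
    intro A x
    calc pp A x ≤ πstar A x * 1 :=
          mul_le_mul_of_nonneg_left (hsc1 A x) (hsnn A x)
      _ = πstar A x := mul_one _
  have hminmul : ∀ (i : Fin K) (y : 𝒳 i), min 1 (ν i y / μ i y) * μ i y = min (μ i y) (ν i y) := by
    intro i y
    rcases le_total (ν i y) (μ i y) with h | h
    · rw [min_eq_right ((div_le_one (hμpos i y)).mpr h), min_eq_right h,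
        div_mul_cancel₀ _ (ne_of_gt (hμpos i y))]
    · rw [min_eq_left ((one_le_div (hμpos i y)).mpr h), min_eq_left h, one_mul]
  have hppmarg_le : ∀ (i : Fin K) (xi : 𝒳 i),
      totMarg 𝒳 L pp i xi ≤ min (μ i xi) (ν i xi) := by
    intro i xi
    have hstep : ∀ A ∈ SKLi K L i, marg 𝒳 A (pp A) i xi
        ≤ min 1 (ν i xi / μ i xi) * marg 𝒳 A (πstar A) i xi := by
      intro A hA
      have hi : i ∈ A := (mem_SKLi.mp hA).2
      have hb : ∀ x : (j : A) → 𝒳 j.1,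
          pp A x ≤ min 1 (ν i (x ⟨i, hi⟩) / μ i (x ⟨i, hi⟩)) * πstar A x := by
        intro x
        have hsle : sc A x ≤ min 1 (ν i (x ⟨i, hi⟩) / μ i (x ⟨i, hi⟩)) := by
          have := prod_le_of_mem (Finset.univ : Finset A)
            (fun j => min 1 (ν j.1 (x j) / μ j.1 (x j)))
            (fun j _ => hminnn j.1 (x j)) (fun j _ => min_le_left _ _)
            (Finset.mem_univ (⟨i, hi⟩ : A))
          exact this
        calc pp A x = πstar A x * sc A x := rfl
          _ ≤ πstar A x * min 1 (ν i (x ⟨i, hi⟩) / μ i (x ⟨i, hi⟩)) :=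
              mul_le_mul_of_nonneg_left hsle (hsnn A x)
          _ = min 1 (ν i (x ⟨i, hi⟩) / μ i (x ⟨i, hi⟩)) * πstar A x := mul_comm _ _
      calc marg 𝒳 A (pp A) i xi
          ≤ marg 𝒳 A (fun x => min 1 (ν i (x ⟨i, hi⟩) / μ i (x ⟨i, hi⟩)) * πstar A x) i xi :=
            marg_mono 𝒳 hb i xi
        _ = min 1 (ν i xi / μ i xi) * marg 𝒳 A (πstar A) i xi :=
            marg_mul_left 𝒳 hi (fun y => min 1 (ν i y / μ i y)) (πstar A) xi
    calc totMarg 𝒳 L pp i xi ≤ ∑ A ∈ SKLi K L i, min 1 (ν i xi / μ i xi) * marg 𝒳 A (πstar A) i xi :=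
          Finset.sum_le_sum hstep
      _ = min 1 (ν i xi / μ i xi) * totMarg 𝒳 L πstar i xi := by
          rw [← Finset.mul_sum]; rfl
      _ = min 1 (ν i xi / μ i xi) * μ i xi := by rw [hπstar.2.2 i xi]
      _ = min (μ i xi) (ν i xi) := hminmul i xi
  have hppmargnn : ∀ (i : Fin K) (xi : 𝒳 i), 0 ≤ totMarg 𝒳 L pp i xi :=
    fun i xi => totMarg_nonneg 𝒳 hppnn i xi
  -- ===== the filled coupling pdd =====
  set d : (i : Fin K) → 𝒳 i → ℝ := fun i xi => ν i xi - totMarg 𝒳 L pp i xi with hddef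
  have hdnn : ∀ i xi, 0 ≤ d i xi := by
    intro i xi
    have := hppmarg_le i xi
    have := min_le_right (μ i xi) (ν i xi)
    simp only [hddef]
    linarith
  have hdle : ∀ i xi, d i xi ≤ ν i xi := by
    intro i xi
    have := hppmargnn i xi
    simp only [hddef]
    linarith
  set pdd : (A : Finset (Fin K)) → ((j : A) → 𝒳 j.1) → ℝ :=
    fun A x => pp A x + fillF 𝒳 d A x with hpdddef
  have hflnn : ∀ A x, 0 ≤ fillF 𝒳 d A x := by
    intro A x
    refine Finset.sum_nonneg fun j _ => ?_
    rcases eq_or_ne A {(j.1 : Fin K)} with h | h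
    · rw [if_pos h]; exact hdnn j.1 (x j)
    · rw [if_neg h]
  have hpddnn : ∀ A x, 0 ≤ pdd A x := fun A x => add_nonneg (hppnn A x) (hflnn A x)
  have hpddmarg : ∀ (i : Fin K) (xi : 𝒳 i), totMarg 𝒳 L pdd i xi = ν i xi := by
    intro i xi
    rw [hpdddef]
    rw [totMarg_add 𝒳 L pp (fillF 𝒳 d) i xi, totMarg_fillF 𝒳 hL d i xi]
    simp only [hddef]
    ring
  have hpddvan : ∀ A x, c A x = ⊤ → pdd A x = 0 := by
    intro A x hT
    have h1 : πstar A x = 0 := hπstar.2.1 A x hT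
    have h2 : fillF 𝒳 d A x = 0 := by
      refine fillF_eq_zero 𝒳 ?_ x
      intro j hAj
      subst hAj
      rw [hc] at hT
      exact ENNReal.zero_ne_top hT
    simp only [hpdddef, hppdef, h1, h2, zero_mul, add_zero]
  have hptvan : ∀ A x, c A x = ⊤ → pt A x = 0 := by
    intro A x hT
    rw [hptdef]
    unfold piInd
    rw [if_pos hT]
  have hstar1 : ∀ A ∈ SKL K L, ∀ x : (j : A) → 𝒳 j.1, πstar A x ≤ 1 := by
    intro A hA x
    obtain ⟨hne, hcard⟩ := mem_SKL.mp hA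
    obtain ⟨i, hi⟩ := hne
    have h1 : πstar A x ≤ marg 𝒳 A (πstar A) i (x ⟨i, hi⟩) := by
      rw [marg_apply 𝒳 hi]
      have : πstar A x = if x ⟨i, hi⟩ = x ⟨i, hi⟩ then πstar A x else 0 := by simp
      rw [this]
      have hnn : ∀ y : (j : A) → 𝒳 j.1,
          0 ≤ if y ⟨i, hi⟩ = x ⟨i, hi⟩ then πstar A y else 0 := by
        intro y
        split
        · exact hsnn A y
        · exact le_refl 0
      exact Finset.single_le_sum
        (f := fun y : (j : A) → 𝒳 j.1 => if y ⟨i, hi⟩ = x ⟨i, hi⟩ then πstar A y else 0)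
        (fun y _ => hnn y) (Finset.mem_univ x)
    have h2 : marg 𝒳 A (πstar A) i (x ⟨i, hi⟩) ≤ totMarg 𝒳 L πstar i (x ⟨i, hi⟩) :=
      Finset.single_le_sum
        (f := fun B => marg 𝒳 B (πstar B) i (x ⟨i, hi⟩))
        (fun B _ => marg_nonneg 𝒳 (hsnn B) i _)
        (mem_SKLi.mpr ⟨mem_SKL.mp hA, hi⟩)
    rw [hπstar.2.2 i (x ⟨i, hi⟩)] at h2
    linarith [hμ1 i (x ⟨i, hi⟩)]
  have hpdd52 : ∀ A ∈ SKL K L, ∀ x : (j : A) → 𝒳 j.1, pdd A x ≤ 5/2 := by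
    intro A hA x
    have hfl : fillF 𝒳 d A x ≤ 5/4 := by
      by_cases hsing : ∃ j : Fin K, A = {j}
      · obtain ⟨j, rfl⟩ := hsing
        rw [fillF_singleton]
        calc d j (x (j0 j)) ≤ ν j (x (j0 j)) := hdle j _
          _ ≤ 5/4 := hν54 j _
      · push_neg at hsing
        rw [fillF_eq_zero 𝒳 hsing x]
        norm_num
    have hppb : pp A x ≤ 1 := le_trans (hpple A x) (hstar1 A hA x)
    simp only [hpdddef]
    linarith
  -- ===== Step 1 : rounding error =====
  have hswap : ∑ i : Fin K, l1 (fun xi : 𝒳 i => ν i xi - μ i xi) = e0 := by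
    rw [he0def]
    unfold l1
    refine Finset.sum_congr rfl fun i _ => Finset.sum_congr rfl fun xi _ => ?_
    rw [abs_sub_comm]
  have hchain1 : Fobj 𝒳 L c πhat ≤ Fobj 𝒳 L c pt + cmax 𝒳 L c * (L * e0) := by
    have hpoint : ∀ A ∈ SKL K L, ∀ x : (j : A) → 𝒳 j.1,
        (1 + (c A x).toReal) * πhat A x
          ≤ (1 + (c A x).toReal) * pt A x + cmax 𝒳 L c * |πhat A x - pt A x| := by
      intro A hA x
      by_cases hT : c A x = ⊤
      · rw [hπhatVan A x hT, hptvan A x hT]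
        simp
      · have h1 := hle_cm A hA x hT
        have h2 : πhat A x - pt A x ≤ |πhat A x - pt A x| := le_abs_self _
        have h3 : (0:ℝ) ≤ 1 + (c A x).toReal := by positivity
        nlinarith [abs_nonneg (πhat A x - pt A x)]
    have hsum : Fobj 𝒳 L c πhat ≤ Fobj 𝒳 L c pt
        + cmax 𝒳 L c * ∑ A ∈ SKL K L, l1 (fun x => πhat A x - pt A x) := by
      unfold Fobj l1
      have h4 := Finset.sum_le_sum (s := SKL K L) fun A hA =>
        Finset.sum_le_sum fun x (_ : x ∈ Finset.univ) => hpoint A hA x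
      simp only [Finset.sum_add_distrib, ← Finset.mul_sum] at h4
      exact h4
    have h5 : ∑ A ∈ SKL K L, l1 (fun x => πhat A x - pt A x) ≤ L * e0 := by
      rw [← hswap]
      exact hπhatRound
    nlinarith [hcmpos]
  -- ===== Step 2 : the Gibbs comparison =====
  set Sf : ((A : Finset (Fin K)) → ((j : A) → 𝒳 j.1) → ℝ) → ℝ :=
    fun π => ∑ A ∈ SKL K L, ∑ x : (j : A) → 𝒳 j.1, π A x * (Real.log (π A x) - 1)
    with hSfdef
  have hsplit : ∀ (π : (A : Finset (Fin K)) → ((j : A) → 𝒳 j.1) → ℝ),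
      (∀ (i : Fin K) (xi : 𝒳 i), totMarg 𝒳 L π i xi = ν i xi) →
      ∑ A ∈ SKL K L, ∑ x : (j : A) → 𝒳 j.1,
        ((1 + (c A x).toReal) * π A x + η * (π A x * (Real.log (π A x) - 1))
          - (∑ j : A, g j.1 (x j)) * π A x)
        = Fobj 𝒳 L c π + η * Sf π - ∑ i : Fin K, ∑ xi : 𝒳 i, g i xi * ν i xi := by
    intro π hm
    have hW : ∑ A ∈ SKL K L, ∑ x : (j : A) → 𝒳 j.1, (∑ j : A, g j.1 (x j)) * π A x
        = ∑ i : Fin K, ∑ xi : 𝒳 i, g i xi * ν i xi := by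
      rw [sum_weight 𝒳 L g π]
      exact Finset.sum_congr rfl fun i _ => Finset.sum_congr rfl fun xi _ => by rw [hm i xi]
    simp only [Finset.sum_add_distrib, Finset.sum_sub_distrib, ← Finset.mul_sum]
    rw [hW]
    rfl
  have hptmarg : ∀ (i : Fin K) (xi : 𝒳 i), totMarg 𝒳 L pt i xi = ν i xi :=
    fun i xi => rfl
  have hgibbs : Fobj 𝒳 L c pt + η * Sf pt ≤ Fobj 𝒳 L c pdd + η * Sf pdd := by
    have hpoint : ∀ A ∈ SKL K L, ∀ x : (j : A) → 𝒳 j.1,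
        (1 + (c A x).toReal) * pt A x + η * (pt A x * (Real.log (pt A x) - 1))
            - (∑ j : A, g j.1 (x j)) * pt A x
          ≤ (1 + (c A x).toReal) * pdd A x + η * (pdd A x * (Real.log (pdd A x) - 1))
            - (∑ j : A, g j.1 (x j)) * pdd A x := by
      intro A hA x
      by_cases hT : c A x = ⊤
      · rw [hptvan A x hT, hpddvan A x hT]
      · have hpt_eq : pt A x
            = Real.exp ((∑ j : A, g j.1 (x j) - (1 + (c A x).toReal)) / η) := by
          rw [hptdef]
          unfold piInd
          rw [if_neg hT]
        rw [hpt_eq]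
        exact gibbs_pointwise hηpos (hpddnn A x)
    have hsum := Finset.sum_le_sum (s := SKL K L) fun A hA =>
      Finset.sum_le_sum fun x (_ : x ∈ Finset.univ) => hpoint A hA x
    rw [hsplit pt hptmarg, hsplit pdd hpddmarg] at hsum
    linarith
  -- ===== Step 3 : cost of the rounded coupling pdd =====
  set s0 : ℝ := ∑ i : Fin K, ∑ xi : 𝒳 i, ν i xi with hs0def
  have hs0e0 : s0 ≤ 1 + e0 := by
    have hpt : ∀ (i : Fin K) (xi : 𝒳 i), ν i xi ≤ μ i xi + |μ i xi - ν i xi| := by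
      intro i xi
      have := neg_abs_le (μ i xi - ν i xi)
      linarith
    calc s0 ≤ ∑ i : Fin K, ∑ xi : 𝒳 i, (μ i xi + |μ i xi - ν i xi|) :=
          Finset.sum_le_sum fun i _ => Finset.sum_le_sum fun xi _ => hpt i xi
      _ = 1 + e0 := by
          simp only [Finset.sum_add_distrib]
          rw [hmass, he0def]
          rfl
  have hs0nn : 0 ≤ s0 :=
    Finset.sum_nonneg fun i _ => Finset.sum_nonneg fun xi _ => hνnn i xi
  set D : ℝ := ∑ A ∈ SKL K L, ∑ x : (j : A) → 𝒳 j.1, (πstar A x - pp A x) with hDdef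
  have hD0 : 0 ≤ D :=
    Finset.sum_nonneg fun A _ => Finset.sum_nonneg fun x _ => by linarith [hpple A x]
  have hDe0 : D ≤ e0 := by
    have hpw : ∀ A ∈ SKL K L, ∀ x : (j : A) → 𝒳 j.1,
        πstar A x - pp A x
          ≤ (∑ j : A, (1 - min 1 (ν j.1 (x j) / μ j.1 (x j)))) * πstar A x := by
      intro A hA x
      have hprod := prod_ge_one_sub_sum (Finset.univ : Finset A)
        (fun j => min 1 (ν j.1 (x j) / μ j.1 (x j)))
        (fun j _ => hminnn j.1 (x j)) (fun j _ => min_le_left _ _)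
      have hsnn' := hsnn A x
      have : πstar A x - pp A x = πstar A x * (1 - sc A x) := by
        simp only [hppdef]; ring
      rw [this, mul_comm (∑ j : A, (1 - min 1 (ν j.1 (x j) / μ j.1 (x j)))) (πstar A x)]
      refine mul_le_mul_of_nonneg_left ?_ hsnn'
      have : (1 : ℝ) - ∑ j : A, (1 - min 1 (ν j.1 (x j) / μ j.1 (x j)))
          ≤ sc A x := by
        simpa [hscdef] using hprod
      linarith [Finset.sum_sub_distrib (s := (Finset.univ : Finset A))
        (f := fun _ : A => (1:ℝ)) (g := fun j : A => min 1 (ν j.1 (x j) / μ j.1 (x j)))]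
    have h6 : D ≤ ∑ A ∈ SKL K L, ∑ x : (j : A) → 𝒳 j.1,
        (∑ j : A, (1 - min 1 (ν j.1 (x j) / μ j.1 (x j)))) * πstar A x := by
      rw [hDdef]
      exact Finset.sum_le_sum fun A hA => Finset.sum_le_sum fun x _ => hpw A hA x
    rw [sum_weight 𝒳 L (fun j y => 1 - min 1 (ν j y / μ j y)) πstar] at h6
    have h7 : ∀ (i : Fin K) (xi : 𝒳 i),
        (1 - min 1 (ν i xi / μ i xi)) * totMarg 𝒳 L πstar i xi ≤ |μ i xi - ν i xi| := by
      intro i xi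
      rw [hπstar.2.2 i xi, sub_mul, one_mul, hminmul i xi]
      rcases le_total (ν i xi) (μ i xi) with h | h
      · rw [min_eq_right h]
        exact le_abs_self _
      · rw [min_eq_left h]
        simp [abs_nonneg]
    calc D ≤ ∑ i : Fin K, ∑ xi : 𝒳 i,
          (1 - min 1 (ν i xi / μ i xi)) * totMarg 𝒳 L πstar i xi := h6
      _ ≤ ∑ i : Fin K, ∑ xi : 𝒳 i, |μ i xi - ν i xi| :=
          Finset.sum_le_sum fun i _ => Finset.sum_le_sum fun xi _ => h7 i xi
      _ = e0 := by rw [he0def]; rfl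
  have hchain3 : Fobj 𝒳 L c pdd ≤ Fobj 𝒳 L c πstar + L * e0 := by
    -- split the objective of pdd
    have hsplit2 : Fobj 𝒳 L c pdd = Fobj 𝒳 L c pp
        + ∑ A ∈ SKL K L, ∑ x : (j : A) → 𝒳 j.1, (1 + (c A x).toReal) * fillF 𝒳 d A x := by
      unfold Fobj
      rw [← Finset.sum_add_distrib]
      refine Finset.sum_congr rfl fun A _ => ?_
      rw [← Finset.sum_add_distrib]
      refine Finset.sum_congr rfl fun x _ => ?_
      simp only [hpdddef]
      ring
    -- the fill only sits on singletons, where the cost is 1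
    have hfillcost : ∀ A ∈ SKL K L, ∀ x : (j : A) → 𝒳 j.1,
        (1 + (c A x).toReal) * fillF 𝒳 d A x = (∑ j : A, (1:ℝ)) * fillF 𝒳 d A x := by
      intro A hA x
      by_cases hsing : ∃ j : Fin K, A = {j}
      · obtain ⟨j, rfl⟩ := hsing
        rw [hc]
        norm_num
      · push_neg at hsing
        rw [fillF_eq_zero 𝒳 hsing x, mul_zero, mul_zero]
    have hfillsum : ∑ A ∈ SKL K L, ∑ x : (j : A) → 𝒳 j.1,
        (1 + (c A x).toReal) * fillF 𝒳 d A x = ∑ i : Fin K, ∑ xi : 𝒳 i, d i xi := by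
      rw [Finset.sum_congr rfl fun A hA =>
        Finset.sum_congr rfl fun x _ => hfillcost A hA x]
      rw [sum_weight 𝒳 L (fun _ _ => (1:ℝ)) (fillF 𝒳 d)]
      refine Finset.sum_congr rfl fun i _ => Finset.sum_congr rfl fun xi _ => ?_
      rw [totMarg_fillF 𝒳 hL d i xi, one_mul]
    -- d sums
    have hcardsum : ∀ (π : (A : Finset (Fin K)) → ((j : A) → 𝒳 j.1) → ℝ),
        ∑ A ∈ SKL K L, ∑ x : (j : A) → 𝒳 j.1, (∑ j : A, (1:ℝ)) * π A x
          = ∑ i : Fin K, ∑ xi : 𝒳 i, totMarg 𝒳 L π i xi := by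
      intro π
      rw [sum_weight 𝒳 L (fun _ _ => (1:ℝ)) π]
      simp only [one_mul]
    have hdsum : ∑ i : Fin K, ∑ xi : 𝒳 i, d i xi
        = s0 - 1 + ∑ A ∈ SKL K L, ∑ x : (j : A) → 𝒳 j.1,
            (∑ j : A, (1:ℝ)) * (πstar A x - pp A x) := by
      have h8 : ∑ i : Fin K, ∑ xi : 𝒳 i, d i xi
          = s0 - ∑ i : Fin K, ∑ xi : 𝒳 i, totMarg 𝒳 L pp i xi := by
        simp only [hddef, Finset.sum_sub_distrib, hs0def]
      have h9 : ∑ A ∈ SKL K L, ∑ x : (j : A) → 𝒳 j.1,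
          (∑ j : A, (1:ℝ)) * (πstar A x - pp A x)
          = ∑ i : Fin K, ∑ xi : 𝒳 i, totMarg 𝒳 L πstar i xi
            - ∑ i : Fin K, ∑ xi : 𝒳 i, totMarg 𝒳 L pp i xi := by
        rw [← hcardsum πstar, ← hcardsum pp]
        simp only [mul_sub, Finset.sum_sub_distrib]
      have h10 : ∑ i : Fin K, ∑ xi : 𝒳 i, totMarg 𝒳 L πstar i xi = 1 := by
        rw [← hmass]
        exact Finset.sum_congr rfl fun i _ => Finset.sum_congr rfl fun xi _ =>
          hπstar.2.2 i xi
      rw [h8, h9, h10]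
      ring
    have hcardD : ∑ A ∈ SKL K L, ∑ x : (j : A) → 𝒳 j.1,
        (∑ j : A, (1:ℝ)) * (πstar A x - pp A x) ≤ L * D := by
      rw [hDdef, Finset.mul_sum]
      refine Finset.sum_le_sum fun A hA => ?_
      rw [Finset.mul_sum]
      refine Finset.sum_le_sum fun x _ => ?_
      have hcard : (∑ j : A, (1:ℝ)) = (A.card : ℝ) := by
        simp [Finset.card_univ]
      have hcardL : (A.card : ℝ) ≤ L := by exact_mod_cast (mem_SKL.mp hA).2
      have hnn : 0 ≤ πstar A x - pp A x := by linarith [hpple A x]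
      rw [hcard]
      exact mul_le_mul_of_nonneg_right hcardL hnn
    have hFpp : Fobj 𝒳 L c pp ≤ Fobj 𝒳 L c πstar - D := by
      have hpw2 : ∀ A ∈ SKL K L, ∀ x : (j : A) → 𝒳 j.1,
          (1 + (c A x).toReal) * pp A x
            ≤ (1 + (c A x).toReal) * πstar A x - (πstar A x - pp A x) := by
        intro A hA x
        have ht : 0 ≤ (c A x).toReal := ENNReal.toReal_nonneg
        have hnn : 0 ≤ πstar A x - pp A x := by linarith [hpple A x]
        nlinarith
      have := Finset.sum_le_sum (s := SKL K L) fun A hA =>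
        Finset.sum_le_sum fun x (_ : x ∈ Finset.univ) => hpw2 A hA x
      simp only [Finset.sum_sub_distrib] at this
      unfold Fobj
      rw [hDdef]
      simp only [Finset.sum_sub_distrib]
      exact this
    have hLL : (1:ℝ) ≤ (L:ℝ) := hLR
    rw [hsplit2, hfillsum, hdsum]
    nlinarith [hcardD, hFpp, hDe0, hD0]
  -- ===== Step 4 : entropy bounds =====
  have hSpdd : Sf pdd ≤ 0 := by
    refine Finset.sum_nonpos fun A hA => Finset.sum_nonpos fun x _ => ?_
    exact plogp_nonpos (hpddnn A x) (hpdd52 A hA x)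
  have ha1 : 1 ≤ a := by
    have h := Finset.le_sup (f := fun i : Fin K => Fintype.card (𝒳 i)) (Finset.mem_univ i0)
    have hpos := Fintype.card_pos (α := 𝒳 i0)
    rw [ha]
    exact le_trans hpos h
  have haR : (1:ℝ) ≤ (a:ℝ) := by exact_mod_cast ha1
  have hK0 : 0 < K := lt_of_lt_of_le (by norm_num) hK
  have hKR : (0:ℝ) < (K:ℝ) := by exact_mod_cast hK0
  have ha0 : (a:ℝ) ≠ 0 := by
    intro h0
    rw [h0] at haR
    linarith
  have haM : (a:ℝ) * M⁻¹ = (K:ℝ)⁻¹ := by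
    rw [hMdef]
    push_cast
    rw [mul_inv, mul_comm ((K:ℝ))⁻¹ ((a:ℝ))⁻¹, ← mul_assoc, mul_inv_cancel₀ ha0, one_mul]
  have hcardPi : ∀ A : Finset (Fin K),
      ((Fintype.card ((j : A) → 𝒳 j.1) : ℕ) : ℝ) ≤ (a:ℝ) ^ A.card := by
    intro A
    rw [Fintype.card_pi]
    push_cast
    calc ∏ j : A, (Fintype.card (𝒳 j.1) : ℝ) ≤ ∏ j : A, (a : ℝ) :=
          Finset.prod_le_prod (fun j _ => by positivity)
            (fun j _ => by
              exact_mod_cast Finset.le_sup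
                (f := fun i : Fin K => Fintype.card (𝒳 i)) (Finset.mem_univ j.1))
      _ = (a:ℝ) ^ A.card := by
          rw [Finset.prod_const, Finset.card_univ, Fintype.card_coe]
  have hcard1 : ∀ A : Finset (Fin K), (∑ j : A, (1:ℝ)) = (A.card : ℝ) := by
    intro A
    rw [Finset.sum_const, Finset.card_univ, Fintype.card_coe, nsmul_eq_mul, mul_one]
  have hT3A : ∀ A ∈ SKL K L, ∑ x : (j : A) → 𝒳 j.1,
      Real.exp (-((∑ j : A, (1:ℝ)) * Real.log M) - 1)
        ≤ Real.exp (-1) * ((K:ℝ)⁻¹) ^ A.card := by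
    intro A hA
    have hexp_eq : Real.exp (-((∑ j : A, (1:ℝ)) * Real.log M) - 1)
        = Real.exp (-1) * (M⁻¹) ^ A.card := by
      rw [hcard1 A]
      rw [show -((A.card:ℝ) * Real.log M) - 1 = (-1) + (A.card:ℝ) * Real.log M⁻¹ by
        rw [Real.log_inv]; ring]
      rw [Real.exp_add]
      congr 1
      rw [Real.exp_nat_mul, Real.exp_log (inv_pos.mpr hMpos)]
    rw [Finset.sum_const, Finset.card_univ, nsmul_eq_mul, hexp_eq]
    have h1 := hcardPi A
    have h2 : ((K:ℝ)⁻¹) ^ A.card = (a:ℝ)^A.card * (M⁻¹)^A.card := by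
      rw [← mul_pow, haM]
    rw [h2]
    have hMinv : (0:ℝ) ≤ (M⁻¹)^A.card := by positivity
    have hexpnn : (0:ℝ) ≤ Real.exp (-1) := (Real.exp_pos _).le
    nlinarith [mul_le_mul_of_nonneg_right h1 (mul_nonneg hexpnn hMinv)]
  have hT3 : ∑ A ∈ SKL K L, ∑ x : (j : A) → 𝒳 j.1,
      Real.exp (-((∑ j : A, (1:ℝ)) * Real.log M) - 1) ≤ 1 - Real.exp (-1) := by
    calc ∑ A ∈ SKL K L, ∑ x : (j : A) → 𝒳 j.1,
        Real.exp (-((∑ j : A, (1:ℝ)) * Real.log M) - 1)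
        ≤ ∑ A ∈ SKL K L, Real.exp (-1) * ((K:ℝ)⁻¹) ^ A.card :=
          Finset.sum_le_sum hT3A
      _ = Real.exp (-1) * ∑ A ∈ SKL K L, ((K:ℝ)⁻¹) ^ A.card := by rw [Finset.mul_sum]
      _ ≤ Real.exp (-1) * (Real.exp 1 - 1) :=
          mul_le_mul_of_nonneg_left (sum_inv_pow_card hK1 L) (Real.exp_pos _).le
      _ = 1 - Real.exp (-1) := by
          rw [Real.exp_neg]
          have h := (Real.exp_pos 1).ne'
          field_simp
  have hcardsum2 : ∑ A ∈ SKL K L, ∑ x : (j : A) → 𝒳 j.1, (∑ j : A, (1:ℝ)) * pt A x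
      = s0 := by
    rw [sum_weight 𝒳 L (fun _ _ => (1:ℝ)) pt, hs0def]
    exact Finset.sum_congr rfl fun i _ => Finset.sum_congr rfl fun xi _ => one_mul _
  have hptleC : ∀ A ∈ SKL K L, ∀ x : (j : A) → 𝒳 j.1,
      pt A x ≤ (∑ j : A, (1:ℝ)) * pt A x := by
    intro A hA x
    have hne := (mem_SKL.mp hA).1
    have hcpos : 0 < A.card := Finset.card_pos.mpr hne
    have hone : (1:ℝ) ≤ ∑ j : A, (1:ℝ) := by
      rw [hcard1 A]
      exact_mod_cast hcpos
    calc pt A x = 1 * pt A x := (one_mul _).symm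
      _ ≤ (∑ j : A, (1:ℝ)) * pt A x := mul_le_mul_of_nonneg_right hone (hptnn A x)
  have hmasspt : ∑ A ∈ SKL K L, ∑ x : (j : A) → 𝒳 j.1, pt A x ≤ s0 := by
    rw [← hcardsum2]
    exact Finset.sum_le_sum fun A hA => Finset.sum_le_sum fun x _ => hptleC A hA x
  have hBle : ∑ A ∈ SKL K L, ∑ x : (j : A) → 𝒳 j.1, pt A x * (1 - Real.log (pt A x))
      ≤ (1 + δ') * (1 + Real.log M) + (1 - Real.exp (-1)) := by
    have hcell : ∀ A ∈ SKL K L, ∀ x : (j : A) → 𝒳 j.1,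
        pt A x * (1 - Real.log (pt A x))
          ≤ pt A x + Real.log M * ((∑ j : A, (1:ℝ)) * pt A x)
            + Real.exp (-((∑ j : A, (1:ℝ)) * Real.log M) - 1) := by
      intro A hA x
      have h := cell_entropy (p := pt A x) (t := (∑ j : A, (1:ℝ)) * Real.log M) (hptnn A x)
      linarith [h]
    have hmid : ∑ A ∈ SKL K L, ∑ x : (j : A) → 𝒳 j.1,
        Real.log M * ((∑ j : A, (1:ℝ)) * pt A x)
        = Real.log M * ∑ A ∈ SKL K L, ∑ x : (j : A) → 𝒳 j.1, (∑ j : A, (1:ℝ)) * pt A x := by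
      rw [Finset.mul_sum]
      refine Finset.sum_congr rfl fun A _ => ?_
      rw [Finset.mul_sum]
    have hlogs0 : Real.log M * s0 ≤ Real.log M * (1 + δ') :=
      mul_le_mul_of_nonneg_left (by linarith [hs0e0, he0δ']) (le_of_lt hlogMpos)
    have hs0d : s0 ≤ 1 + δ' := by linarith [hs0e0, he0δ']
    calc ∑ A ∈ SKL K L, ∑ x : (j : A) → 𝒳 j.1, pt A x * (1 - Real.log (pt A x))
        ≤ ∑ A ∈ SKL K L, ∑ x : (j : A) → 𝒳 j.1,
            (pt A x + Real.log M * ((∑ j : A, (1:ℝ)) * pt A x)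
              + Real.exp (-((∑ j : A, (1:ℝ)) * Real.log M) - 1)) :=
          Finset.sum_le_sum fun A hA => Finset.sum_le_sum fun x _ => hcell A hA x
      _ = (∑ A ∈ SKL K L, ∑ x : (j : A) → 𝒳 j.1, pt A x)
          + Real.log M * s0
          + ∑ A ∈ SKL K L, ∑ x : (j : A) → 𝒳 j.1,
              Real.exp (-((∑ j : A, (1:ℝ)) * Real.log M) - 1) := by
          simp only [Finset.sum_add_distrib]
          rw [hmid, hcardsum2]
      _ ≤ (1 + δ') + Real.log M * (1 + δ') + (1 - Real.exp (-1)) := by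
          have hA1 : ∑ A ∈ SKL K L, ∑ x : (j : A) → 𝒳 j.1, pt A x ≤ 1 + δ' :=
            le_trans hmasspt hs0d
          linarith [hT3, hA1, hlogs0]
      _ = (1 + δ') * (1 + Real.log M) + (1 - Real.exp (-1)) := by ring
  have hSptLB : -((1 + δ') * (1 + Real.log M) + (1 - Real.exp (-1))) ≤ Sf pt := by
    have hSfeq : Sf pt
        = -(∑ A ∈ SKL K L, ∑ x : (j : A) → 𝒳 j.1, pt A x * (1 - Real.log (pt A x))) := by
      simp only [hSfdef]
      rw [← Finset.sum_neg_distrib]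
      refine Finset.sum_congr rfl fun A _ => ?_
      rw [← Finset.sum_neg_distrib]
      exact Finset.sum_congr rfl fun x _ => by ring
    rw [hSfeq]
    exact neg_le_neg hBle
  -- ===== Step 5 : numerics =====
  have hexpinv : (2.7182818286:ℝ)⁻¹ < Real.exp (-1) := by
    rw [Real.exp_neg]
    exact inv_strictAnti₀ (Real.exp_pos 1) Real.exp_one_lt_d9
  have hnum : (1 + δ') * (1 + Real.log M) + (1 - Real.exp (-1)) ≤ 2 * L * Real.log M := by
    have hx : (0.6931471803:ℝ) < Real.log M := lt_of_lt_of_le hlog2 hlogM2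
    exact numeric_final hx (le_of_lt hδ'pos) hδ'14 hLR2 hexpinv
  have hent : η * Sf pdd - η * Sf pt ≤ δ / 2 := by
    have h1 : Sf pdd - Sf pt ≤ (1 + δ') * (1 + Real.log M) + (1 - Real.exp (-1)) := by
      linarith [hSpdd, hSptLB]
    have h2 : Sf pdd - Sf pt ≤ 2 * L * Real.log M := le_trans h1 hnum
    have h3 : η * (Sf pdd - Sf pt) ≤ η * (2 * L * Real.log M) :=
      mul_le_mul_of_nonneg_left h2 (le_of_lt hηpos)
    have h4 : η * (2 * L * Real.log M) = δ / 2 := by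
      rw [hη']
      field_simp
    linarith [h3, h4]
  -- ===== Step 6 : final assembly =====
  have hc1 : cmax 𝒳 L c * (L * e0) ≤ δ / 4 := by
    have h1 : cmax 𝒳 L c * ((L:ℝ) * δ') = δ / 4 := by
      rw [hδ']
      field_simp
      ring
    have h2 : cmax 𝒳 L c * ((L:ℝ) * e0) ≤ cmax 𝒳 L c * ((L:ℝ) * δ') := by
      have hLnn : (0:ℝ) ≤ (L:ℝ) := by positivity
      have := mul_le_mul_of_nonneg_left he0δ' hLnn
      exact mul_le_mul_of_nonneg_left this (le_of_lt hcmpos)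
    linarith
  have hc3 : (L:ℝ) * e0 ≤ δ / 4 := by
    have h1 : (L:ℝ) * δ' = δ / (4 * cmax 𝒳 L c) := by
      rw [hδ']
      field_simp
      ring
    have h2 : (L:ℝ) * e0 ≤ (L:ℝ) * δ' :=
      mul_le_mul_of_nonneg_left he0δ' (by positivity)
    have h3 : δ / (4 * cmax 𝒳 L c) ≤ δ / 4 := by
      have h4 : (4:ℝ) ≤ 4 * cmax 𝒳 L c := by linarith
      exact div_le_div_of_nonneg_left (le_of_lt hδ) (by norm_num) h4
    linarith
  linarith [hchain1, hgibbs, hchain3, hent, hc1, hc3]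






end
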